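/- Let T be a proper trunk in a combinatorial code C (T ≠ C). Then T, considered as a code, has strictly fewer trunks than C. -/
import Mathlib


/-- The trunk of `σ` in the code `C`. -/
def Tk {n : ℕ} (C : Set (Finset (Fin n))) (σ : Finset (Fin n)) : Set (Finset (Fin n)) :=
  {c ∈ C | σ ⊆ c}

/-- `T` is a trunk in the code `C`. -/
def IsTrunk {n : ℕ} (C T : Set (Finset (Fin n))) : Prop :=
  T = ∅ ∨ ∃ σ, T = Tk C σ

/-- A proper trunk `T` of a code `C`, considered itself as a code, has strictly fewer trunks
than `C`. -/
theorem proper_trunk_fewer_trunks {n : ℕ} (C T : Set (Finset (Fin n)))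
    (hT : IsTrunk C T) (hne : T ≠ C) :
    {S | IsTrunk T S}.ncard < {S | IsTrunk C S}.ncard := by
  have hTC : T ⊆ C := by
    rcases hT with rfl | ⟨σ, rfl⟩
    · exact Set.empty_subset _
    · exact fun x hx => hx.1
  obtain ⟨c, hcC, hcT⟩ := Set.exists_of_ssubset ⟨hTC, fun h => hne (Set.Subset.antisymm hTC h)⟩
  apply Set.ncard_lt_ncard _ (Set.toFinite _)
  constructor
  · intro S hS
    rcases hS with rfl | ⟨τ, rfl⟩
    · exact Or.inl rfl
    · rcases hT with rfl | ⟨σ, rfl⟩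
      · left; ext x; simp [Tk]
      · right; refine ⟨σ ∪ τ, ?_⟩
        ext x
        simp only [Tk, Set.mem_setOf_eq, Finset.union_subset_iff]
        tauto
  · intro hsub
    have hmem : c ∈ Tk C c := ⟨hcC, subset_rfl⟩
    have h : IsTrunk T (Tk C c) := hsub (Or.inr ⟨c, rfl⟩)
    rcases h with h | ⟨τ, h⟩
    · rw [h] at hmem; exact hmem
    · rw [h] at hmem; exact hcT hmem.1
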